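/- The digraph H'(6) is strongly connected, satisfies max{d(x), d(y)} ≥ 5 for every dominating pair of vertices {x, y}, but is not hamiltonian. (Hence the bound 2a ≥ 8 in the main hamiltonicity theorem is sharp.) -/

import Mathlib

open Finset

variable {V : Type*}

/-- Total degree (out-degree plus in-degree) of `x` in the digraph with arc relation `A`. -/
noncomputable def deg (A : V → V → Prop) (x : V) : ℕ :=
  Set.ncard {y | A x y} + Set.ncard {y | A y x}

/-- The digraph with arc relation `A` is strongly connected. -/
def StrongConn (A : V → V → Prop) : Prop :=
  ∀ u v : V, Relation.ReflTransGen A u v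

/-- `{x, y}` is a dominating pair: distinct vertices with a common out-neighbour. -/
def DomPair (A : V → V → Prop) (x y : V) : Prop :=
  x ≠ y ∧ ∃ z, A x z ∧ A y z

/-- `X, Y` is a bipartition of the digraph `A`: the two parts partition the vertex
set and every arc joins the two parts. -/
def IsBipartition (A : V → V → Prop) (X Y : Set V) : Prop :=
  Disjoint X Y ∧ X ∪ Y = Set.univ ∧
    ∀ u v, A u v → (u ∈ X ∧ v ∈ Y) ∨ (u ∈ Y ∧ v ∈ X)

/-- The digraph `A` has a hamiltonian (directed) cycle. -/
def Hamiltonian [Fintype V] (A : V → V → Prop) : Prop :=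
  ∃ f : ZMod (Fintype.card V) → V, Function.Bijective f ∧ ∀ i, A (f i) (f (i + 1))

/-- The arcs of the digraph `H'(6)`; vertices `0,1,2` are `x₀,x₁,x₂` and `3,4,5`
are `y₀,y₁,y₂`. -/
def H6'Arcs : List (Fin 6 × Fin 6) :=
  [(3,1), (4,2), (0,5),
   (0,3), (3,0), (1,4), (4,1), (2,5), (5,2),
   (0,4), (4,0), (1,5), (5,1)]

/-- The digraph `H'(6)` of Example 6. -/
def H6' (u v : Fin 6) : Prop := (u, v) ∈ H6'Arcs

instance : ∀ u v : Fin 6, Decidable (H6' u v) := fun u v =>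
  inferInstanceAs (Decidable ((u, v) ∈ H6'Arcs))

instance : ∀ u v : ZMod 6, Decidable (H6' u v) := fun u v =>
  (inferInstance : ∀ a b : Fin 6, Decidable (H6' a b)) u v

lemma degcalc (x : Fin 6) (s t : Finset (Fin 6))
    (hs : ∀ y, H6' x y ↔ y ∈ s) (ht : ∀ y, H6' y x ↔ y ∈ t) :
    deg H6' x = s.card + t.card := by
  have h1 : {y | H6' x y} = ↑s := by ext y; simpa using hs y
  have h2 : {y | H6' y x} = ↑t := by ext y; simpa using ht y
  rw [deg, h1, h2, Set.ncard_coe_finset, Set.ncard_coe_finset]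

lemma deg0 : deg H6' 0 = 5 := by rw [degcalc 0 {3,4,5} {3,4} (by decide) (by decide)]; decide
lemma deg1 : deg H6' 1 = 5 := by rw [degcalc 1 {4,5} {3,4,5} (by decide) (by decide)]; decide
lemma deg4 : deg H6' 4 = 5 := by rw [degcalc 4 {0,1,2} {0,1} (by decide) (by decide)]; decide
lemma deg5 : deg H6' 5 = 5 := by rw [degcalc 5 {1,2} {0,1,2} (by decide) (by decide)]; decide

lemma reach0 (v : Fin 6) : Relation.ReflTransGen H6' 0 v := by
  have h04 : Relation.ReflTransGen H6' 0 4 := .single (by decide)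
  fin_cases v
  · exact .refl
  · exact h04.tail (by decide)
  · exact h04.tail (by decide)
  · exact .single (by decide)
  · exact h04
  · exact .single (by decide)

lemma to0 (v : Fin 6) : Relation.ReflTransGen H6' v 0 := by
  have h40 : Relation.ReflTransGen H6' 4 0 := .single (by decide)
  have h10 : Relation.ReflTransGen H6' 1 0 := .head (by decide) h40
  have h50 : Relation.ReflTransGen H6' 5 0 := .head (by decide) h10
  fin_cases v
  · exact .refl
  · exact h10
  · exact .head (by decide) h50
  · exact .single (by decide)
  · exact h40
  · exact h50

/-- The digraph `H'(6)` is strongly connected and satisfies `max {d(x), d(y)} ≥ 5` for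
every dominating pair, but is not hamiltonian. -/
theorem stmt13 :
    StrongConn H6' ∧
    (∀ x y : Fin 6, DomPair H6' x y → 5 ≤ max (deg H6' x) (deg H6' y)) ∧
    ¬ Hamiltonian H6' := by
  refine ⟨fun u v => (to0 u).trans (reach0 v), ?_, ?_⟩
  · rintro x y ⟨hne, z, hx, hy⟩
    fin_cases x <;> fin_cases y <;>
      simp_all [deg0, deg1, deg4, deg5] <;>
      · revert hx hy; fin_cases z <;> decide
  · rintro ⟨f, hbij, hcyc⟩
    have key : ∀ e : Equiv.Perm (ZMod 6), ∃ i, ¬ H6' (e i) (e (i + 1)) := by set_option maxRecDepth 4000 in decide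
    let e : Equiv.Perm (ZMod 6) := Equiv.ofBijective (f : ZMod 6 → ZMod 6) hbij
    obtain ⟨i, hi⟩ := key e
    exact hi (hcyc i)
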